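/- Let a < b < c < d be real numbers and define f : ℝ × ℝ → ℝ² by f(u,v) = ((u+v)/2, (uv+1)/2) (so that f(u,v) is the circumcenter of the triangle with vertices (0,1), (u,0), (v,0) whenever u ≠ v). Then the image of the rectangle [a,b] × [c,d] under f equals the filled quadrilateral with vertices f(a,c), f(a,d), f(b,d), f(b,c), i.e. f([a,b] × [c,d]) is equal to the convex hull of the four points {f(a,c), f(a,d), f(b,d), f(b,c)}. -/

import Mathlib

open Real

/-- The circumcenter of the triangle with vertices (0,1), (u,0), (v,0),
as a point of the Euclidean plane. -/
noncomputable def qf (u v : ℝ) : EuclideanSpace ℝ (Fin 2) := WithLp.toLp 2 ![(u + v) / 2, (u * v + 1) / 2]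

lemma qf_comb1 (a b c t : ℝ) :
    (1 - t) • qf a c + t • qf b c = qf ((1 - t) * a + t * b) c := by
  ext i
  fin_cases i <;>
    simp [qf, PiLp.add_apply, PiLp.smul_apply, smul_eq_mul] <;> ring

lemma qf_comb2 (u c d s : ℝ) :
    (1 - s) • qf u c + s • qf u d = qf u ((1 - s) * c + s * d) := by
  ext i
  fin_cases i <;>
    simp [qf, PiLp.add_apply, PiLp.smul_apply, smul_eq_mul] <;> ring

/-- Pure real-arithmetic core of the surjectivity direction: any (x, y) satisfying the
four sign conditions on the quadratic z² - 2xz + (2y - 1) at a, b, c, d arises as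
((u+v)/2, (uv+1)/2) with u ∈ [a,b], v ∈ [c,d]. -/
lemma qf_aux (a b c d x y : ℝ) (hab : a < b) (hbc : b < c) (hcd : c < d)
    (h1 : 0 ≤ a^2 - 2*x*a + 2*y - 1) (h2 : b^2 - 2*x*b + 2*y - 1 ≤ 0)
    (h3 : c^2 - 2*x*c + 2*y - 1 ≤ 0) (h4 : 0 ≤ d^2 - 2*x*d + 2*y - 1) :
    ∃ u v : ℝ, a ≤ u ∧ u ≤ b ∧ c ≤ v ∧ v ≤ d ∧ u + v = 2*x ∧ u * v = 2*y - 1 := by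
  have hΔ : 0 ≤ x^2 - (2*y - 1) := by nlinarith [sq_nonneg (x - b)]
  obtain ⟨r, hr0, hr2⟩ : ∃ r : ℝ, 0 ≤ r ∧ r^2 = x^2 - (2*y - 1) :=
    ⟨Real.sqrt (x^2 - (2*y - 1)), Real.sqrt_nonneg _, Real.sq_sqrt hΔ⟩
  set u := x - r with hu
  set v := x + r with hv
  have huv : u ≤ v := by rw [hu, hv]; linarith
  have hsum : u + v = 2*x := by rw [hu, hv]; ring
  have hprod : u * v = 2*y - 1 := by rw [hu, hv]; linear_combination -hr2
  have ga : 0 ≤ (a - u) * (a - v) := by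
    have e : (a - u) * (a - v) = a^2 - 2*x*a + 2*y - 1 := by
      linear_combination (-a) * hsum + hprod
    linarith
  have gb : (b - u) * (b - v) ≤ 0 := by
    have e : (b - u) * (b - v) = b^2 - 2*x*b + 2*y - 1 := by
      linear_combination (-b) * hsum + hprod
    linarith
  have gc : (c - u) * (c - v) ≤ 0 := by
    have e : (c - u) * (c - v) = c^2 - 2*x*c + 2*y - 1 := by
      linear_combination (-c) * hsum + hprod
    linarith
  have gd : 0 ≤ (d - u) * (d - v) := by
    have e : (d - u) * (d - v) = d^2 - 2*x*d + 2*y - 1 := by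
      linear_combination (-d) * hsum + hprod
    linarith
  have hub : u ≤ b := by
    by_contra h; push_neg at h
    nlinarith [mul_pos (show (0:ℝ) < u - b by linarith) (show (0:ℝ) < v - b by linarith)]
  have hcv : c ≤ v := by
    by_contra h; push_neg at h
    nlinarith [mul_pos (show (0:ℝ) < c - u by linarith) (show (0:ℝ) < c - v by linarith)]
  have hau : a ≤ u := by
    by_contra h; push_neg at h
    nlinarith [mul_pos (show (0:ℝ) < a - u by linarith) (show (0:ℝ) < v - a by linarith)]
  have hvd : v ≤ d := by
    by_contra h; push_neg at h
    nlinarith [mul_pos (show (0:ℝ) < d - u by linarith) (show (0:ℝ) < v - d by linarith)]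
  exact ⟨u, v, hau, hub, hcv, hvd, hsum, hprod⟩

/-- As u ranges over [a,b] and v over [c,d] (with a < b < c < d), the circumcenter
f(u,v) = ((u+v)/2, (uv+1)/2) fills exactly the quadrilateral with vertices
f(a,c), f(a,d), f(b,d), f(b,c). -/
theorem quadrilateral_image (a b c d : ℝ) (hab : a < b) (hbc : b < c) (hcd : c < d) :
    (fun p : ℝ × ℝ => qf p.1 p.2) '' (Set.Icc a b ×ˢ Set.Icc c d) =
      convexHull ℝ ({qf a c, qf a d, qf b d, qf b c} : Set (EuclideanSpace ℝ (Fin 2))) := by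
  set K : Set (EuclideanSpace ℝ (Fin 2)) := {qf a c, qf a d, qf b d, qf b c} with hK
  have hac : qf a c ∈ convexHull ℝ K := subset_convexHull ℝ K (by simp [hK])
  have had : qf a d ∈ convexHull ℝ K := subset_convexHull ℝ K (by simp [hK])
  have hbd : qf b d ∈ convexHull ℝ K := subset_convexHull ℝ K (by simp [hK])
  have hbc' : qf b c ∈ convexHull ℝ K := subset_convexHull ℝ K (by simp [hK])
  have hconv := convex_convexHull ℝ K
  apply Set.Subset.antisymm
  · rintro p ⟨⟨u, v⟩, hp, rfl⟩
    obtain ⟨⟨hau, hub⟩, ⟨hcv, hvd⟩⟩ := hp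
    have hba : (0:ℝ) < b - a := by linarith
    have hdc : (0:ℝ) < d - c := by linarith
    set t := (u - a) / (b - a) with ht
    set s := (v - c) / (d - c) with hs
    have ht0 : 0 ≤ t := div_nonneg (by linarith) (by linarith)
    have ht1 : t ≤ 1 := (div_le_one hba).2 (by linarith)
    have hs0 : 0 ≤ s := div_nonneg (by linarith) (by linarith)
    have hs1 : s ≤ 1 := (div_le_one hdc).2 (by linarith)
    have hut : (1 - t) * a + t * b = u := by
      have h : t * (b - a) = u - a := div_mul_cancel₀ _ (ne_of_gt hba)
      linear_combination h
    have hvs : (1 - s) * c + s * d = v := by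
      have h : s * (d - c) = v - c := div_mul_cancel₀ _ (ne_of_gt hdc)
      linear_combination h
    have h1 : qf u c ∈ convexHull ℝ K := by
      refine hconv.segment_subset hac hbc' ⟨1 - t, t, by linarith, ht0, by ring, ?_⟩
      rw [qf_comb1, hut]
    have h2 : qf u d ∈ convexHull ℝ K := by
      refine hconv.segment_subset had hbd ⟨1 - t, t, by linarith, ht0, by ring, ?_⟩
      rw [qf_comb1, hut]
    refine hconv.segment_subset h1 h2 ⟨1 - s, s, by linarith, hs0, by ring, ?_⟩
    rw [qf_comb2, hvs]
  · set T : Set (EuclideanSpace ℝ (Fin 2)) :=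
      {p | 0 ≤ a^2 - 2 * p 0 * a + 2 * p 1 - 1 ∧
           b^2 - 2 * p 0 * b + 2 * p 1 - 1 ≤ 0 ∧
           c^2 - 2 * p 0 * c + 2 * p 1 - 1 ≤ 0 ∧
           0 ≤ d^2 - 2 * p 0 * d + 2 * p 1 - 1} with hT
    have hTconv : Convex ℝ T := by
      rintro p hp q hq α β hα hβ hαβ
      obtain ⟨hp1, hp2, hp3, hp4⟩ := hp
      obtain ⟨hq1, hq2, hq3, hq4⟩ := hq
      have e0 : (α • p + β • q) 0 = α * p 0 + β * q 0 := by
        simp [PiLp.add_apply, PiLp.smul_apply, smul_eq_mul]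
      have e1 : (α • p + β • q) 1 = α * p 1 + β * q 1 := by
        simp [PiLp.add_apply, PiLp.smul_apply, smul_eq_mul]
      refine ⟨?_, ?_, ?_, ?_⟩ <;> simp only [Set.mem_setOf_eq, e0, e1]
      · nlinarith [mul_nonneg hα hp1, mul_nonneg hβ hq1]
      · nlinarith [mul_nonneg hα (neg_nonneg.2 hp2), mul_nonneg hβ (neg_nonneg.2 hq2)]
      · nlinarith [mul_nonneg hα (neg_nonneg.2 hp3), mul_nonneg hβ (neg_nonneg.2 hq3)]
      · nlinarith [mul_nonneg hα hp4, mul_nonneg hβ hq4]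
    have hcorners : K ⊆ T := by
      rintro p hp
      simp only [hK, Set.mem_insert_iff, Set.mem_singleton_iff] at hp
      rcases hp with rfl | rfl | rfl | rfl <;>
        refine ⟨?_, ?_, ?_, ?_⟩ <;> simp [qf] <;> nlinarith
    have hhull : convexHull ℝ K ⊆ T := convexHull_min hcorners hTconv
    intro p hp
    obtain ⟨h1, h2, h3, h4⟩ := hhull hp
    obtain ⟨u, v, hau, hub, hcv, hvd, hsum, hprod⟩ :=
      qf_aux a b c d (p 0) (p 1) hab hbc hcd h1 h2 h3 h4
    refine ⟨(u, v), ⟨⟨hau, hub⟩, ⟨hcv, hvd⟩⟩, ?_⟩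
    ext i
    fin_cases i <;> simp only [qf, Matrix.cons_val_zero, Matrix.cons_val_one, Matrix.head_cons]
    · show (u + v) / 2 = p 0; linarith
    · show (u * v + 1) / 2 = p 1; linarith
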